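/- Let ω = e^{2πi/N} and suppose A, B ∈ GL_N(ℂ) satisfy A B A⁻¹ B⁻¹ = ω · I_N. Then there exist an invertible matrix P and nonzero scalars λ, μ ∈ ℂ such that P A P⁻¹ = λ S_N and P B P⁻¹ = μ D_N, where S_N and D_N are the shift and clock matrices. (Finite Stone–von Neumann uniqueness: up to conjugation and scalars, the clock–shift pair is the unique solution.) -/

import Mathlib

open Complex Matrix BigOperators

/-- `ω = e^{2πi/N}`, a primitive `N`-th root of unity. -/
noncomputable def clockOmega (N : ℕ) : ℂ := Complex.exp (2 * Real.pi * Complex.I / N)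

/-- The `N×N` clock matrix `D_N = diag(1, ω, …, ω^{N-1})`. -/
noncomputable def clock (N : ℕ) : Matrix (ZMod N) (ZMod N) ℂ :=
  Matrix.diagonal fun i => clockOmega N ^ i.val

/-- The `N×N` cyclic shift matrix: `(S_N)_{i,j} = 1` iff `j ≡ i+1 (mod N)`. -/
noncomputable def shift (N : ℕ) : Matrix (ZMod N) (ZMod N) ℂ :=
  Matrix.of fun i j => if j = i + 1 then 1 else 0

section aux
variable {N : ℕ} [NeZero N]

-- ZMod facts
lemma zmod_neg_one_val : ((-1 : ZMod N)).val = N - 1 := by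
  cases N with
  | zero => exact absurd rfl (NeZero.ne 0)
  | succ n => exact ZMod.val_neg_one n

lemma zmod_add_one_val {x : ZMod N} (hx : x ≠ -1) : (x + 1).val = x.val + 1 := by
  have hN : 1 < N := by
    rcases Nat.lt_or_ge 1 N with h | h
    · exact h
    · interval_cases N
      · exact absurd rfl (NeZero.ne 0)
      · exact absurd (Subsingleton.elim x (-1)) hx
  have hxv : x.val ≠ N - 1 := by
    intro hc
    apply hx
    have : x.val = ((-1 : ZMod N)).val := by rw [hc, zmod_neg_one_val]
    exact ZMod.val_injective N this
  have hlt : x.val + 1 < N := by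
    have := ZMod.val_lt x
    omega
  haveI : Fact (1 < N) := ⟨hN⟩
  rw [ZMod.val_add, ZMod.val_one, Nat.mod_eq_of_lt hlt]

lemma omega_pow_N : clockOmega N ^ N = 1 := by
  have := Complex.isPrimitiveRoot_exp N (NeZero.ne N)
  exact this.pow_eq_one

lemma omega_inv_pow_neg_val (j : ZMod N) :
    (clockOmega N)⁻¹ ^ ((-j).val) = clockOmega N ^ j.val := by
  have hω : clockOmega N ≠ 0 := Complex.exp_ne_zero _
  have hdvd : N ∣ j.val + (-j).val := by
    have : (j.val + (-j).val) % N = 0 := by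
      have := ZMod.val_add j (-j)
      simp at this
      omega
    omega
  obtain ⟨q, hq⟩ := hdvd
  have h1 : clockOmega N ^ j.val * clockOmega N ^ (-j).val = 1 := by
    rw [← pow_add, hq, pow_mul, omega_pow_N, one_pow]
  rw [inv_pow]
  exact inv_eq_of_mul_eq_one_left h1

end aux

set_option maxHeartbeats 1000000 in
/-- Finite Stone–von Neumann uniqueness: any pair `(A,B)` with `A B A⁻¹ B⁻¹ = ω·I`,
`ω = e^{2πi/N}`, is simultaneously conjugate to the shift and clock matrices up to scalars. -/
theorem stone_von_neumann_finite (N : ℕ) [NeZero N] (A B : Matrix (ZMod N) (ZMod N) ℂ)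
    (hA : IsUnit A) (hB : IsUnit B)
    (h : A * B * A⁻¹ * B⁻¹ = clockOmega N • (1 : Matrix (ZMod N) (ZMod N) ℂ)) :
    ∃ P : Matrix (ZMod N) (ZMod N) ℂ, IsUnit P ∧ ∃ lam mu : ℂ, lam ≠ 0 ∧ mu ≠ 0 ∧
      P * A * P⁻¹ = lam • shift N ∧ P * B * P⁻¹ = mu • clock N := by
  set ω := clockOmega N with hωdef
  have hω0 : ω ≠ 0 := Complex.exp_ne_zero _
  have hωprim : IsPrimitiveRoot ω N := Complex.isPrimitiveRoot_exp N (NeZero.ne N)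
  have hAdet : IsUnit A.det := (Matrix.isUnit_iff_isUnit_det A).mp hA
  have hBdet : IsUnit B.det := (Matrix.isUnit_iff_isUnit_det B).mp hB
  -- the basic commutation relation
  have hAB : A * B = ω • (B * A) := by
    have h2 := congrArg (fun M => M * (B * A)) h
    simp only [Matrix.smul_mul, Matrix.one_mul] at h2
    have h3 : A * B * A⁻¹ * B⁻¹ * (B * A) = A * B := by
      simp only [Matrix.mul_assoc]
      rw [Matrix.nonsing_inv_mul_cancel_left _ _ hBdet,
        Matrix.nonsing_inv_mul _ hAdet, Matrix.mul_one]
    rw [← h3]; exact h2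
  have hBA : ∀ m : ℕ, B * A ^ m = (ω⁻¹) ^ m • (A ^ m * B) := by
    intro m
    induction m with
    | zero => simp
    | succ m ih =>
      have hstep : B * A = ω⁻¹ • (A * B) := by
        rw [hAB, smul_smul, inv_mul_cancel₀ hω0, one_smul]
      calc B * A ^ (m + 1) = (B * A ^ m) * A := by rw [Matrix.mul_assoc, ← pow_succ]
        _ = (ω⁻¹) ^ m • (A ^ m * (B * A)) := by rw [ih, Matrix.smul_mul, Matrix.mul_assoc]
        _ = (ω⁻¹) ^ m • (A ^ m * (ω⁻¹ • (A * B))) := by rw [hstep]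
        _ = (ω⁻¹) ^ (m + 1) • (A ^ (m + 1) * B) := by
            rw [Matrix.mul_smul, smul_smul, ← pow_succ, ← Matrix.mul_assoc, ← pow_succ]
  -- eigenvector of B
  have : Nontrivial (ZMod N → ℂ) :=
    ⟨⟨0, 1, fun hc => zero_ne_one (α := ℂ) (congrFun hc 0)⟩⟩
  obtain ⟨β, hβ⟩ := Module.End.exists_eigenvalue (Matrix.mulVecLin B)
  obtain ⟨v, hv⟩ := hβ.exists_hasEigenvector
  have hv0 : v ≠ 0 := hv.right
  have hvB : B *ᵥ v = β • v := by
    have := hv.apply_eq_smul; simpa using this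
  have hβ0 : β ≠ 0 := by
    intro hc
    apply hv0
    have h0 : B *ᵥ v = 0 := by rw [hvB, hc, zero_smul]
    have := congrArg (fun x => B⁻¹ *ᵥ x) h0
    simpa [Matrix.mulVec_mulVec, Matrix.nonsing_inv_mul _ hBdet] using this
  -- powers of A applied to v
  have hψ0 : ∀ m : ℕ, (A ^ m) *ᵥ v ≠ 0 := by
    intro m hc
    apply hv0
    have hdet : IsUnit (A ^ m).det := by
      rw [Matrix.det_pow]; exact hAdet.pow m
    have := congrArg (fun x => (A ^ m)⁻¹ *ᵥ x) hc
    simpa [Matrix.mulVec_mulVec, Matrix.nonsing_inv_mul _ hdet] using this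
  have hψB : ∀ m : ℕ, B *ᵥ ((A ^ m) *ᵥ v) = (β * (ω⁻¹) ^ m) • ((A ^ m) *ᵥ v) := by
    intro m
    calc B *ᵥ ((A ^ m) *ᵥ v) = (B * A ^ m) *ᵥ v := Matrix.mulVec_mulVec _ _ _
      _ = ((ω⁻¹) ^ m • (A ^ m * B)) *ᵥ v := by rw [hBA m]
      _ = (ω⁻¹) ^ m • ((A ^ m) *ᵥ (B *ᵥ v)) := by
          rw [Matrix.smul_mulVec, Matrix.mulVec_mulVec]
      _ = (ω⁻¹) ^ m • (β • ((A ^ m) *ᵥ v)) := by rw [hvB, Matrix.mulVec_smul]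
      _ = (β * (ω⁻¹) ^ m) • ((A ^ m) *ᵥ v) := by rw [smul_smul, mul_comm]
  have hψA : ∀ m : ℕ, A *ᵥ ((A ^ m) *ᵥ v) = (A ^ (m + 1)) *ᵥ v := by
    intro m
    rw [Matrix.mulVec_mulVec, ← pow_succ']
  -- omega facts expressed with the local ω
  have hωval : ∀ j : ZMod N, (ω⁻¹) ^ ((-j).val) = ω ^ j.val := by
    intro j; rw [hωdef]; exact omega_inv_pow_neg_val j
  have hωN : ω ^ N = 1 := by rw [hωdef]; exact omega_pow_N
  -- eigenvalue family is injective
  have hμinj : Function.Injective (fun j : ZMod N => β * ω ^ j.val) := by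
    intro j k hjk
    simp only at hjk
    exact ZMod.val_injective N
      (hωprim.pow_inj (ZMod.val_lt j) (ZMod.val_lt k) (mul_left_cancel₀ hβ0 hjk))
  -- the (unscaled) eigenvector family
  have htB : ∀ j : ZMod N,
      B *ᵥ ((A ^ (-j).val) *ᵥ v) = (β * ω ^ j.val) • ((A ^ (-j).val) *ᵥ v) := by
    intro j
    rw [hψB, hωval]
  have hEig : ∀ j : ZMod N, Module.End.HasEigenvector (Matrix.mulVecLin B) (β * ω ^ j.val)
      ((A ^ (-j).val) *ᵥ v) := by
    intro j
    exact ⟨Module.End.mem_eigenspace_iff.mpr (by simpa using htB j), hψ0 _⟩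
  have li : LinearIndependent ℂ (fun j : ZMod N => (A ^ (-j).val) *ᵥ v) :=
    Module.End.eigenvectors_linearIndependent' (Matrix.mulVecLin B)
      (fun j : ZMod N => β * ω ^ j.val) hμinj _ hEig
  have hcard : Fintype.card (ZMod N) = Module.finrank ℂ (ZMod N → ℂ) := by
    rw [Module.finrank_pi]
  have : Nonempty (ZMod N) := ⟨0⟩
  let b : Module.Basis (ZMod N) ℂ (ZMod N → ℂ) := basisOfLinearIndependentOfCardEqFinrank li hcard
  have hb : ⇑b = fun j : ZMod N => (A ^ (-j).val) *ᵥ v :=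
    coe_basisOfLinearIndependentOfCardEqFinrank li hcard
  -- A^N v is a multiple of v
  have hb0 : b 0 = v := by
    rw [hb]; simp
  have huB : B *ᵥ ((A ^ N) *ᵥ v) = β • ((A ^ N) *ᵥ v) := by
    have h1 := hψB N
    rw [inv_pow, hωN, inv_one, mul_one] at h1
    exact h1
  have hrepr0 : ∀ j : ZMod N, j ≠ 0 → b.repr ((A ^ N) *ᵥ v) j = 0 := by
    intro j hj
    set c : ZMod N → ℂ := fun k => b.repr ((A ^ N) *ᵥ v) k with hc
    have hsum : ∑ k : ZMod N, c k • b k = (A ^ N) *ᵥ v := b.sum_repr _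
    have h1 := congrArg (fun x => B *ᵥ x) hsum
    rw [huB] at h1
    have h2 : B *ᵥ (∑ k : ZMod N, c k • b k) = ∑ k : ZMod N, (c k * (β * ω ^ k.val)) • b k := by
      calc B *ᵥ (∑ k : ZMod N, c k • b k) = ∑ k : ZMod N, c k • (B *ᵥ b k) := by
            rw [← Matrix.mulVecLin_apply, map_sum]
            simp only [_root_.map_smul, Matrix.mulVecLin_apply, Matrix.mulVec_smul]
        _ = ∑ k : ZMod N, (c k * (β * ω ^ k.val)) • b k := by
            refine Finset.sum_congr rfl fun k _ => ?_
            have hbk : B *ᵥ b k = (β * ω ^ k.val) • b k := by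
              rw [hb]; exact htB k
            rw [hbk, smul_smul]
    rw [h2] at h1
    have h3 : β • ((A ^ N) *ᵥ v) = ∑ k : ZMod N, (β * c k) • b k := by
      rw [← hsum, Finset.smul_sum]
      congr 1
      funext k
      rw [smul_smul]
    rw [h3] at h1
    have h4 : ∑ k : ZMod N, (c k * (β * ω ^ k.val) - β * c k) • b k = 0 := by
      simp only [sub_smul, Finset.sum_sub_distrib, h1, sub_self]
    have h5 := Fintype.linearIndependent_iff.mp b.linearIndependent
      (fun k => c k * (β * ω ^ k.val) - β * c k) h4 j
    have hω1 : ω ^ j.val ≠ 1 := by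
      apply hωprim.pow_ne_one_of_pos_of_lt
      · exact (fun hc0 => hj ((ZMod.val_eq_zero j).mp hc0))
      · exact ZMod.val_lt j
    have h6 : c j * (β * (ω ^ j.val - 1)) = 0 := by rw [← h5]; ring
    rcases mul_eq_zero.mp h6 with h7 | h7
    · exact h7
    · exact absurd h7 (mul_ne_zero hβ0 (sub_ne_zero.mpr hω1))
  have hγ : (A ^ N) *ᵥ v = (b.repr ((A ^ N) *ᵥ v) 0) • v := by
    conv_lhs => rw [← b.sum_repr ((A ^ N) *ᵥ v)]
    rw [Finset.sum_eq_single 0]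
    · rw [hb0]
    · intro k _ hk
      rw [hrepr0 k hk, zero_smul]
    · intro hmem; exact absurd (Finset.mem_univ 0) hmem
  set γ : ℂ := b.repr ((A ^ N) *ᵥ v) 0 with hγdef
  have hγ0 : γ ≠ 0 := by
    intro hc
    apply hψ0 N
    rw [hγ, hc, zero_smul]
  -- choose an N-th root α of γ⁻¹
  obtain ⟨α, hα⟩ := IsAlgClosed.exists_pow_nat_eq (γ⁻¹) (Nat.pos_of_ne_zero (NeZero.ne N))
  have hα0 : α ≠ 0 := by
    intro hc
    rw [hc] at hα
    exact (inv_ne_zero hγ0) (by simpa [zero_pow (NeZero.ne N)] using hα.symm)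
  -- the rescaled eigenvector family w j = α^{(-j).val} • A^{(-j).val} v
  have hwB : ∀ j : ZMod N, B *ᵥ (α ^ ((-j).val) • ((A ^ (-j).val) *ᵥ v))
      = (β * ω ^ j.val) • (α ^ ((-j).val) • ((A ^ (-j).val) *ᵥ v)) := by
    intro j
    rw [Matrix.mulVec_smul, htB j, smul_comm]
  have hw0 : ∀ j : ZMod N, α ^ ((-j).val) • ((A ^ (-j).val) *ᵥ v) ≠ 0 := fun j =>
    smul_ne_zero (pow_ne_zero _ hα0) (hψ0 _)
  have hwA : ∀ j : ZMod N, A *ᵥ (α ^ ((-j).val) • ((A ^ (-j).val) *ᵥ v))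
      = α⁻¹ • (α ^ ((-(j-1)).val) • ((A ^ (-(j-1)).val) *ᵥ v)) := by
    intro j
    rw [Matrix.mulVec_smul, hψA]
    by_cases hj : j = 1
    · subst hj
      have hm : ((-1 : ZMod N)).val = N - 1 := zmod_neg_one_val
      have hN1 : N - 1 + 1 = N := Nat.succ_pred_eq_of_pos (Nat.pos_of_ne_zero (NeZero.ne N))
      rw [sub_self, hm, hN1, hγ]
      simp only [neg_zero, ZMod.val_zero, pow_zero, Matrix.one_mulVec, one_smul]
      rw [smul_smul]
      congr 1
      have hγα : γ = (α ^ N)⁻¹ := by rw [hα, inv_inv]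
      have h8 : α ^ N = α ^ (N - 1) * α := by rw [← pow_succ, hN1]
      rw [hγα, h8]
      field_simp
    · have hval : (-(j-1)).val = (-j).val + 1 := by
        have h9 : (-(j-1) : ZMod N) = (-j) + 1 := by ring
        rw [h9]
        apply zmod_add_one_val
        intro hc
        apply hj
        have := congrArg Neg.neg hc
        simpa using this
      rw [hval, smul_smul]
      congr 1
      rw [pow_succ]
      field_simp
  -- second basis from the rescaled family
  have hEig2 : ∀ j : ZMod N, Module.End.HasEigenvector (Matrix.mulVecLin B) (β * ω ^ j.val)
      (α ^ ((-j).val) • ((A ^ (-j).val) *ᵥ v)) := fun j =>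
    ⟨Module.End.mem_eigenspace_iff.mpr (by rw [Matrix.mulVecLin_apply]; exact hwB j), hw0 j⟩
  have li2 : LinearIndependent ℂ (fun j : ZMod N => α ^ ((-j).val) • ((A ^ (-j).val) *ᵥ v)) :=
    Module.End.eigenvectors_linearIndependent' (Matrix.mulVecLin B)
      (fun j : ZMod N => β * ω ^ j.val) hμinj _ hEig2
  let b₂ : Module.Basis (ZMod N) ℂ (ZMod N → ℂ) := basisOfLinearIndependentOfCardEqFinrank li2 hcard
  have hb₂ : ⇑b₂ = fun j : ZMod N => α ^ ((-j).val) • ((A ^ (-j).val) *ᵥ v) :=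
    coe_basisOfLinearIndependentOfCardEqFinrank li2 hcard
  -- the change-of-basis matrix
  let Q : Matrix (ZMod N) (ZMod N) ℂ := (Pi.basisFun ℂ (ZMod N)).toMatrix ⇑b₂
  have hQ : ∀ i j, Q i j = (α ^ ((-j).val) • ((A ^ (-j).val) *ᵥ v)) i := by
    intro i j
    show (Pi.basisFun ℂ (ZMod N)).toMatrix (⇑b₂) i j = _
    rw [Module.Basis.toMatrix_apply, hb₂]
    simp
  have hQright : Q * (b₂.toMatrix ⇑(Pi.basisFun ℂ (ZMod N))) = 1 :=
    Module.Basis.toMatrix_mul_toMatrix_flip _ _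
  have hQdet : IsUnit Q.det := Matrix.isUnit_det_of_right_inverse hQright
  -- A * Q = α⁻¹ • (Q * shift N)
  have hAQ : A * Q = α⁻¹ • (Q * shift N) := by
    ext i j
    have h1 : (A * Q) i j = (A *ᵥ (α ^ ((-j).val) • ((A ^ (-j).val) *ᵥ v))) i := by
      simp only [Matrix.mul_apply, Matrix.mulVec, dotProduct]
      refine Finset.sum_congr rfl fun k _ => ?_
      rw [hQ]
    have h2 : (Q * shift N) i j = Q i (j - 1) := by
      simp only [Matrix.mul_apply, shift, Matrix.of_apply, mul_ite, mul_one, mul_zero]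
      calc ∑ k : ZMod N, (if j = k + 1 then Q i k else 0)
          = ∑ k : ZMod N, (if k = j - 1 then Q i k else 0) := by
            refine Finset.sum_congr rfl fun k _ => ?_
            by_cases hk : k = j - 1
            · rw [if_pos hk, if_pos (by rw [hk]; ring)]
            · rw [if_neg hk, if_neg (fun hc => hk (by rw [hc]; ring))]
        _ = Q i (j - 1) := Fintype.sum_ite_eq' _ _
    have h3 := congrFun (hwA j) i
    simp only [Pi.smul_apply, smul_eq_mul] at h3
    rw [Matrix.smul_apply, h2, smul_eq_mul, h1, h3, hQ]
    simp only [Pi.smul_apply, smul_eq_mul]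
  -- B * Q = β • (Q * clock N)
  have hBQ : B * Q = β • (Q * clock N) := by
    ext i j
    have h1 : (B * Q) i j = (B *ᵥ (α ^ ((-j).val) • ((A ^ (-j).val) *ᵥ v))) i := by
      simp only [Matrix.mul_apply, Matrix.mulVec, dotProduct]
      refine Finset.sum_congr rfl fun k _ => ?_
      rw [hQ]
    have h2 : (Q * clock N) i j = Q i j * clockOmega N ^ j.val := by
      rw [clock, Matrix.mul_diagonal]
    have h3 := congrFun (hwB j) i
    simp only [Pi.smul_apply, smul_eq_mul] at h3
    rw [Matrix.smul_apply, h2, smul_eq_mul, h1, h3, hQ, ← hωdef]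
    simp only [Pi.smul_apply, smul_eq_mul]
    ring
  -- conclusion
  refine ⟨Q⁻¹, ?_, α⁻¹, β, inv_ne_zero hα0, hβ0, ?_, ?_⟩
  · rw [Matrix.isUnit_nonsing_inv_iff]
    exact (Matrix.isUnit_iff_isUnit_det Q).mpr hQdet
  · rw [Matrix.nonsing_inv_nonsing_inv _ hQdet, Matrix.mul_assoc, hAQ, Matrix.mul_smul,
      Matrix.nonsing_inv_mul_cancel_left _ _ hQdet]
  · rw [Matrix.nonsing_inv_nonsing_inv _ hQdet, Matrix.mul_assoc, hBQ, Matrix.mul_smul,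
      Matrix.nonsing_inv_mul_cancel_left _ _ hQdet]
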